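/- Let h ∈ L²(P) be measurable with respect to σ(σ) ∨ 𝒱, with hWσ integrable; set D := E[hWσ | ℋ] and Ã := −E[D·T⁻¹ | 𝒱₋]·(T•·T)⁻¹ + D·T⁻¹. Assume Ã·W·σ ∈ L²(P) and all displayed quantities are integrable. Then Ã·W·σ ∈ Λ̃₅ and h − Ã·W·σ is orthogonal in L²(P) to every element of Λ̃₅; that is, Ã·W·σ is the orthogonal projection of h onto Λ̃₅. -/

import Mathlib

open MeasureTheory

variable {Ω : Type*}

private lemma mul_int' {m0 : MeasurableSpace Ω} {μ : Measure Ω} {f g : Ω → ℝ}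
    (hf : MemLp f 2 μ) (hg : MemLp g 2 μ) : Integrable (fun ω => f ω * g ω) μ := by
  have : MemLp (f • g) 1 μ := hg.smul hf (hpqr := ⟨by
    rw [inv_one, ← two_mul, ENNReal.mul_inv_cancel two_ne_zero ENNReal.ofNat_ne_top]⟩)
  exact memLp_one_iff_integrable.mp this

private lemma condexp_mul_of_sm' {m m0 : MeasurableSpace Ω} {μ : Measure Ω}
    {f g : Ω → ℝ} (hf : StronglyMeasurable[m] f)
    (hg : Integrable g μ) (hfg : Integrable (fun ω => f ω * g ω) μ) :
    μ[(fun ω => f ω * g ω)|m] =ᵐ[μ] fun ω => f ω * (μ[g|m]) ω :=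
  condExp_mul_of_stronglyMeasurable_left hf hfg hg

private lemma integral_mul_condexp' {m m0 : MeasurableSpace Ω} (hm : m ≤ m0) {μ : Measure Ω}
    [IsFiniteMeasure μ] {f g : Ω → ℝ} (hf : StronglyMeasurable[m] f)
    (hg : Integrable g μ) (hfg : Integrable (fun ω => f ω * g ω) μ) :
    ∫ ω, f ω * g ω ∂μ = ∫ ω, f ω * (μ[g|m]) ω ∂μ := by
  calc ∫ ω, f ω * g ω ∂μ = ∫ ω, (μ[(fun ω => f ω * g ω)|m]) ω ∂μ :=
        (integral_condExp hm).symm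
    _ = ∫ ω, f ω * (μ[g|m]) ω ∂μ := integral_congr_ae (condexp_mul_of_sm' hf hg hfg)

private lemma integrable_mul_condexp' {m m0 : MeasurableSpace Ω} {μ : Measure Ω}
    {f g : Ω → ℝ} (hf : StronglyMeasurable[m] f)
    (hg : Integrable g μ) (hfg : Integrable (fun ω => f ω * g ω) μ) :
    Integrable (fun ω => f ω * (μ[g|m]) ω) μ :=
  integrable_condExp.congr (condexp_mul_of_sm' hf hg hfg)

private lemma integrable_of_sq_mul' {m0 : MeasurableSpace Ω} {μ : Measure Ω} {A T : Ω → ℝ}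
    (hA : AEStronglyMeasurable A μ) (hT : AEStronglyMeasurable T μ)
    (hTpos : ∀ᵐ ω ∂μ, 0 < T ω)
    (h1 : Integrable (fun ω => A ω ^ 2 * T ω) μ)
    (h2 : Integrable (fun ω => (T ω)⁻¹) μ) : Integrable A μ := by
  have hsq : AEStronglyMeasurable (fun ω => Real.sqrt (T ω)) μ :=
    Real.continuous_sqrt.comp_aestronglyMeasurable hT
  have hu : MemLp (fun ω => A ω * Real.sqrt (T ω)) 2 μ := by
    refine (memLp_two_iff_integrable_sq (hA.mul hsq)).mpr (h1.congr ?_)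
    filter_upwards [hTpos] with ω hω
    simp [Pi.mul_apply, mul_pow, Real.sq_sqrt hω.le]
  have hv : MemLp (fun ω => (Real.sqrt (T ω))⁻¹) 2 μ := by
    refine (memLp_two_iff_integrable_sq (hsq.aemeasurable.inv).aestronglyMeasurable).mpr
      (h2.congr ?_)
    filter_upwards [hTpos] with ω hω
    simp only [Pi.inv_apply]
    rw [inv_pow, Real.sq_sqrt hω.le]
  refine (mul_int' hu hv).congr ?_
  filter_upwards [hTpos] with ω hω
  rw [mul_inv_cancel_right₀ (by positivity : Real.sqrt (T ω) ≠ 0)]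

/-- Orthogonality, with all the conditional-expectation quantities abstracted out. -/
private lemma ortho_aux {m0 : MeasurableSpace Ω} (μ : Measure Ω) [IsProbabilityMeasure μ]
    (mVm mH mV : MeasurableSpace Ω)
    (hVmH : mVm ≤ mH) (hHV : mH ≤ mV) (hV : mV ≤ m0)
    (σ h Q W T Tb D G At A : Ω → ℝ)
    (hQ : Q = μ[(fun ω => (σ ω)^2)|mV])
    (hW : W = fun ω => (Q ω)⁻¹)
    (hT : T = μ[W|mH])
    (hD : D = μ[(fun ω => h ω * W ω * σ ω)|mH])
    (hTb : Tb = μ[(fun ω => (T ω)⁻¹)|mVm])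
    (hG : G = μ[(fun ω => D ω * (T ω)⁻¹)|mVm])
    (hAt : At = fun ω => -G ω * (Tb ω * T ω)⁻¹ + D ω * (T ω)⁻¹)
    (hσ2 : MemLp σ 2 μ) (hσvar : ∀ᵐ ω ∂μ, 0 < Q ω)
    (hWint : Integrable W μ) (hTpos : ∀ᵐ ω ∂μ, 0 < T ω)
    (hTinvInt : Integrable (fun ω => (T ω)⁻¹) μ)
    (hh2 : MemLp h 2 μ) (hhWσInt : Integrable (fun ω => h ω * W ω * σ ω) μ)
    (hDTinvInt : Integrable (fun ω => D ω * (T ω)⁻¹) μ)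
    (hAtInt : Integrable At μ)
    (hAtL2 : MemLp (fun ω => At ω * W ω * σ ω) 2 μ)
    (sA : StronglyMeasurable[mH] A) (hA0 : μ[A|mVm] =ᵐ[μ] 0)
    (hfL2 : MemLp (fun ω => A ω * W ω * σ ω) 2 μ) :
    ∫ ω, (h ω - At ω * W ω * σ ω) * (A ω * W ω * σ ω) ∂μ = 0 := by
  have hmH : mH ≤ m0 := hHV.trans hV
  have hmVm : mVm ≤ m0 := hVmH.trans hmH
  -- measurability
  have sQ : StronglyMeasurable[mV] Q := hQ ▸ stronglyMeasurable_condExp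
  have sW : StronglyMeasurable[mV] W := hW ▸ (sQ.measurable.inv).stronglyMeasurable
  have sT : StronglyMeasurable[mH] T := hT ▸ stronglyMeasurable_condExp
  have sD : StronglyMeasurable[mH] D := hD ▸ stronglyMeasurable_condExp
  have sTb : StronglyMeasurable[mVm] Tb := hTb ▸ stronglyMeasurable_condExp
  have sG : StronglyMeasurable[mVm] G := hG ▸ stronglyMeasurable_condExp
  have sAt : StronglyMeasurable[mH] At := by
    rw [hAt]
    exact (((sG.mono hVmH).measurable.neg.mul
      (((sTb.mono hVmH).measurable.mul sT.measurable).inv)).add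
      (sD.measurable.mul sT.measurable.inv)).stronglyMeasurable
  set F : Ω → ℝ := fun ω => G ω * (Tb ω)⁻¹ with hF
  have sF : StronglyMeasurable[mVm] F :=
    (sG.measurable.mul sTb.measurable.inv).stronglyMeasurable
  have hAt_split : ∀ ω, At ω = D ω * (T ω)⁻¹ - F ω * (T ω)⁻¹ := by
    intro ω; rw [hAt]; simp only [hF]; rw [mul_inv]; ring
  have hFT : Integrable (fun ω => F ω * (T ω)⁻¹) μ :=
    (hDTinvInt.sub hAtInt).congr (Filter.Eventually.of_forall fun ω => by simp only [Pi.sub_apply]; rw [hAt_split ω]; ring)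
  have hg2 : Integrable (fun ω => (σ ω)^2) μ :=
    (memLp_two_iff_integrable_sq hσ2.aestronglyMeasurable).mp hσ2
  -- Step 0 : A is integrable
  have hAWσsq : Integrable (fun ω => (A ω * W ω * σ ω)^2) μ :=
    (memLp_two_iff_integrable_sq hfL2.aestronglyMeasurable).mp hfL2
  have sP0 : StronglyMeasurable[mV] (fun ω => A ω * A ω * (W ω * W ω)) :=
    (((sA.mono hHV).measurable.mul (sA.mono hHV).measurable).mul
      (sW.measurable.mul sW.measurable)).stronglyMeasurable
  have hP0g2 : Integrable (fun ω => (A ω * A ω * (W ω * W ω)) * (σ ω)^2) μ :=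
    hAWσsq.congr (Filter.Eventually.of_forall fun ω => by ring)
  have hP0Q : Integrable (fun ω => (A ω * A ω * (W ω * W ω)) * Q ω) μ := by
    have := integrable_mul_condexp' sP0 hg2 hP0g2
    rwa [← hQ] at this
  have hA2W : Integrable (fun ω => A ω ^ 2 * W ω) μ := by
    refine hP0Q.congr ?_
    filter_upwards [hσvar] with ω hω
    have hne : Q ω ≠ 0 := hω.ne'
    simp only [hW]
    field_simp
  have hA2T : Integrable (fun ω => A ω ^ 2 * T ω) μ := by
    have sA2 : StronglyMeasurable[mH] (fun ω => A ω ^ 2) :=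
      (sA.measurable.pow_const 2).stronglyMeasurable
    have := integrable_mul_condexp' sA2 hWint hA2W
    rwa [← hT] at this
  have hAint : Integrable A μ :=
    integrable_of_sq_mul' ((sA.mono hmH).aestronglyMeasurable)
      ((sT.mono hmH).aestronglyMeasurable) hTpos hA2T hTinvInt
  -- integrability of products
  have hhf : Integrable (fun ω => h ω * (A ω * W ω * σ ω)) μ := mul_int' hh2 hfL2
  have hAhWσ : Integrable (fun ω => A ω * (h ω * W ω * σ ω)) μ :=
    hhf.congr (Filter.Eventually.of_forall fun ω => by ring)
  have hAD : Integrable (fun ω => A ω * D ω) μ := by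
    have := integrable_mul_condexp' sA hhWσInt hAhWσ
    rwa [← hD] at this
  -- Step B
  have hB : ∫ ω, h ω * (A ω * W ω * σ ω) ∂μ = ∫ ω, A ω * D ω ∂μ := by
    calc ∫ ω, h ω * (A ω * W ω * σ ω) ∂μ = ∫ ω, A ω * (h ω * W ω * σ ω) ∂μ :=
          integral_congr_ae (Filter.Eventually.of_forall fun ω => by ring)
      _ = ∫ ω, A ω * (μ[(fun ω => h ω * W ω * σ ω)|mH]) ω ∂μ :=
          integral_mul_condexp' hmH sA hhWσInt hAhWσ
      _ = ∫ ω, A ω * D ω ∂μ := by rw [← hD]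
  -- Step C
  have hAtf : Integrable (fun ω => (At ω * W ω * σ ω) * (A ω * W ω * σ ω)) μ :=
    mul_int' hAtL2 hfL2
  have sP1 : StronglyMeasurable[mV] (fun ω => At ω * A ω * (W ω * W ω)) :=
    (((sAt.mono hHV).measurable.mul (sA.mono hHV).measurable).mul
      (sW.measurable.mul sW.measurable)).stronglyMeasurable
  have hP1g2 : Integrable (fun ω => (At ω * A ω * (W ω * W ω)) * (σ ω)^2) μ :=
    hAtf.congr (Filter.Eventually.of_forall fun ω => by ring)
  have hP1Q : Integrable (fun ω => (At ω * A ω * (W ω * W ω)) * Q ω) μ := by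
    have := integrable_mul_condexp' sP1 hg2 hP1g2
    rwa [← hQ] at this
  have hC2ae : (fun ω => (At ω * A ω * (W ω * W ω)) * Q ω) =ᵐ[μ]
      fun ω => At ω * A ω * W ω := by
    filter_upwards [hσvar] with ω hω
    have hne : Q ω ≠ 0 := hω.ne'
    simp only [hW]
    field_simp
  have hAtAW : Integrable (fun ω => At ω * A ω * W ω) μ := hP1Q.congr hC2ae
  have sAtA : StronglyMeasurable[mH] (fun ω => At ω * A ω) :=
    (sAt.measurable.mul sA.measurable).stronglyMeasurable
  have hAtAT : Integrable (fun ω => At ω * A ω * T ω) μ := by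
    have := integrable_mul_condexp' sAtA hWint hAtAW
    rwa [← hT] at this
  have hC6ae : (fun ω => At ω * A ω * T ω) =ᵐ[μ]
      fun ω => A ω * D ω - A ω * F ω := by
    filter_upwards [hTpos] with ω hω
    have hne : T ω ≠ 0 := hω.ne'
    rw [hAt_split ω]
    field_simp
  have hAF : Integrable (fun ω => A ω * F ω) μ := by
    refine (hAD.sub hAtAT).congr ?_
    filter_upwards [hC6ae] with ω e
    simp only [Pi.sub_apply]; rw [e]; ring
  have hFA : Integrable (fun ω => F ω * A ω) μ :=
    hAF.congr (Filter.Eventually.of_forall fun ω => by ring)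
  have hC8 : ∫ ω, A ω * F ω ∂μ = 0 := by
    calc ∫ ω, A ω * F ω ∂μ = ∫ ω, F ω * A ω ∂μ :=
          integral_congr_ae (Filter.Eventually.of_forall fun ω => by ring)
      _ = ∫ ω, F ω * (μ[A|mVm]) ω ∂μ := integral_mul_condexp' hmVm sF hAint hFA
      _ = ∫ ω, (0:ℝ) ∂μ := by
          refine integral_congr_ae ?_
          filter_upwards [hA0] with ω e
          rw [e]; simp
      _ = 0 := integral_zero _ _
  have hC : ∫ ω, (At ω * W ω * σ ω) * (A ω * W ω * σ ω) ∂μ = ∫ ω, A ω * D ω ∂μ := by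
    calc ∫ ω, (At ω * W ω * σ ω) * (A ω * W ω * σ ω) ∂μ
        = ∫ ω, (At ω * A ω * (W ω * W ω)) * (σ ω)^2 ∂μ :=
          integral_congr_ae (Filter.Eventually.of_forall fun ω => by ring)
      _ = ∫ ω, (At ω * A ω * (W ω * W ω)) * (μ[(fun ω => (σ ω)^2)|mV]) ω ∂μ :=
          integral_mul_condexp' hV sP1 hg2 hP1g2
      _ = ∫ ω, (At ω * A ω * (W ω * W ω)) * Q ω ∂μ := by rw [← hQ]
      _ = ∫ ω, At ω * A ω * W ω ∂μ := integral_congr_ae hC2ae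
      _ = ∫ ω, (At ω * A ω) * (μ[W|mH]) ω ∂μ := integral_mul_condexp' hmH sAtA hWint hAtAW
      _ = ∫ ω, At ω * A ω * T ω ∂μ := by rw [← hT]
      _ = ∫ ω, (A ω * D ω - A ω * F ω) ∂μ := integral_congr_ae hC6ae
      _ = ∫ ω, A ω * D ω ∂μ - ∫ ω, A ω * F ω ∂μ := integral_sub hAD hAF
      _ = ∫ ω, A ω * D ω ∂μ := by rw [hC8, sub_zero]
  calc ∫ ω, (h ω - At ω * W ω * σ ω) * (A ω * W ω * σ ω) ∂μ
      = ∫ ω, (h ω * (A ω * W ω * σ ω) - (At ω * W ω * σ ω) * (A ω * W ω * σ ω)) ∂μ :=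
        integral_congr_ae (Filter.Eventually.of_forall fun ω => by ring)
    _ = ∫ ω, h ω * (A ω * W ω * σ ω) ∂μ
        - ∫ ω, (At ω * W ω * σ ω) * (A ω * W ω * σ ω) ∂μ := integral_sub hhf hAtf
    _ = 0 := by rw [hB, hC, sub_self]

/-- Membership part: `Ã` is `ℋ`-measurable and `E[Ã | 𝒱₋] = 0`. -/
private lemma memb_aux {m0 : MeasurableSpace Ω} (μ : Measure Ω) [IsProbabilityMeasure μ]
    (mVm mH : MeasurableSpace Ω) (hVmH : mVm ≤ mH)
    (T Tb D G At : Ω → ℝ)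
    (sT : StronglyMeasurable[mH] T) (sD : StronglyMeasurable[mH] D)
    (hTb : Tb = μ[(fun ω => (T ω)⁻¹)|mVm])
    (hG : G = μ[(fun ω => D ω * (T ω)⁻¹)|mVm])
    (hAt : At = fun ω => -G ω * (Tb ω * T ω)⁻¹ + D ω * (T ω)⁻¹)
    (hTbpos : ∀ᵐ ω ∂μ, 0 < Tb ω)
    (hTinvInt : Integrable (fun ω => (T ω)⁻¹) μ)
    (hDTinvInt : Integrable (fun ω => D ω * (T ω)⁻¹) μ)
    (hAtInt : Integrable At μ) :
    StronglyMeasurable[mH] At ∧ μ[At|mVm] =ᵐ[μ] 0 := by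
  have sTb : StronglyMeasurable[mVm] Tb := hTb ▸ stronglyMeasurable_condExp
  have sG : StronglyMeasurable[mVm] G := hG ▸ stronglyMeasurable_condExp
  have sAt : StronglyMeasurable[mH] At := by
    rw [hAt]
    exact (((sG.mono hVmH).measurable.neg.mul
      (((sTb.mono hVmH).measurable.mul sT.measurable).inv)).add
      (sD.measurable.mul sT.measurable.inv)).stronglyMeasurable
  refine ⟨sAt, ?_⟩
  set F : Ω → ℝ := fun ω => G ω * (Tb ω)⁻¹ with hF
  have sF : StronglyMeasurable[mVm] F :=
    (sG.measurable.mul sTb.measurable.inv).stronglyMeasurable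
  have hAt_split : At = (fun ω => D ω * (T ω)⁻¹) - fun ω => F ω * (T ω)⁻¹ := by
    funext ω
    simp only [hAt, Pi.sub_apply, hF]
    rw [mul_inv]; ring
  have hFT : Integrable (fun ω => F ω * (T ω)⁻¹) μ := by
    refine (hDTinvInt.sub hAtInt).congr ?_
    filter_upwards with ω
    simp only [Pi.sub_apply]
    simp only [hAt, hF]
    rw [mul_inv]; ring
  have h1 : μ[At|mVm] =ᵐ[μ]
      μ[(fun ω => D ω * (T ω)⁻¹)|mVm] - μ[(fun ω => F ω * (T ω)⁻¹)|mVm] := by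
    rw [hAt_split]
    exact condExp_sub hDTinvInt hFT mVm
  have h2 : μ[(fun ω => F ω * (T ω)⁻¹)|mVm] =ᵐ[μ] fun ω => F ω * Tb ω := by
    have := condexp_mul_of_sm' sF hTinvInt hFT
    rwa [← hTb] at this
  refine h1.trans ?_
  filter_upwards [h2, hTbpos] with ω e hω
  simp only [Pi.sub_apply, Pi.zero_apply]
  rw [← hG, e]
  simp only [hF]
  field_simp
  simp

/-- `W := (E[σ² | 𝒱])⁻¹`. -/
noncomputable def Wfun {m0 : MeasurableSpace Ω} (μ : Measure Ω) (mV : MeasurableSpace Ω)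
    (σ : Ω → ℝ) : Ω → ℝ :=
  fun ω => ((μ[(fun ω' => (σ ω')^2)|mV]) ω)⁻¹

/-- `T := E[W | ℋ]`. -/
noncomputable def Tfun {m0 : MeasurableSpace Ω} (μ : Measure Ω)
    (mV mH : MeasurableSpace Ω) (σ : Ω → ℝ) : Ω → ℝ :=
  μ[Wfun μ mV σ|mH]

/-- `T• := E[T⁻¹ | 𝒱₋]`. -/
noncomputable def Tbul {m0 : MeasurableSpace Ω} (μ : Measure Ω)
    (mV mH mVm : MeasurableSpace Ω) (σ : Ω → ℝ) : Ω → ℝ :=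
  μ[(fun ω => (Tfun μ mV mH σ ω)⁻¹)|mVm]

/-- `D := E[h·W·σ | ℋ]`. -/
noncomputable def Dfun {m0 : MeasurableSpace Ω} (μ : Measure Ω)
    (mV mH : MeasurableSpace Ω) (σ h : Ω → ℝ) : Ω → ℝ :=
  μ[(fun ω => h ω * Wfun μ mV σ ω * σ ω)|mH]

/-- `Ã := −E[D·T⁻¹ | 𝒱₋]·(T•·T)⁻¹ + D·T⁻¹`. -/
noncomputable def Atilde {m0 : MeasurableSpace Ω} (μ : Measure Ω)
    (mV mH mVm : MeasurableSpace Ω) (σ h : Ω → ℝ) : Ω → ℝ :=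
  fun ω => -(μ[(fun ω' => Dfun μ mV mH σ h ω' * (Tfun μ mV mH σ ω')⁻¹)|mVm]) ω *
      (Tbul μ mV mH mVm σ ω * Tfun μ mV mH σ ω)⁻¹
    + Dfun μ mV mH σ h ω * (Tfun μ mV mH σ ω)⁻¹

/-- The subspace `Λ̃₅ = {A•·W·σ ∈ L² : A• ℋ-measurable with E[A• | 𝒱₋] = 0 a.s.}`. -/
def LambdaTilde5 {m0 : MeasurableSpace Ω} (μ : Measure Ω)
    (mV mH mVm : MeasurableSpace Ω) (σ : Ω → ℝ) : Set (Ω → ℝ) :=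
  {f | ∃ A : Ω → ℝ, StronglyMeasurable[mH] A ∧ μ[A|mVm] =ᵐ[μ] 0 ∧
    f = (fun ω => A ω * Wfun μ mV σ ω * σ ω) ∧ MemLp f 2 μ}

/-- projection onto `Λ̃₅`.
With nested sub-σ-algebras `𝒱₋ ⊆ ℋ ⊆ 𝒱 ⊆ ℱ` and `σ, W, T, T•` as in the context, let
`h ∈ L²(P)` be measurable with respect to `σ(σ) ∨ 𝒱` with `h·W·σ` integrable; set
`D := E[hWσ | ℋ]` and `Ã := −E[D·T⁻¹ | 𝒱₋]·(T•·T)⁻¹ + D·T⁻¹`, assume `Ã·W·σ ∈ L²(P)`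
and the displayed quantities are integrable.  Then `Ã·W·σ ∈ Λ̃₅` and `h − Ã·W·σ` is
orthogonal in `L²(P)` to every element of `Λ̃₅`; i.e. `Ã·W·σ` is the orthogonal
projection of `h` onto `Λ̃₅`. -/
theorem projection_onto_LambdaTilde5
    {m0 : MeasurableSpace Ω} (μ : Measure Ω) [IsProbabilityMeasure μ]
    (mVm mH mV : MeasurableSpace Ω)
    (hVmH : mVm ≤ mH) (hHV : mH ≤ mV) (hV : mV ≤ m0)
    (σ : Ω → ℝ) (hσ2 : MemLp σ 2 μ)
    (hσcond : μ[σ|mV] =ᵐ[μ] 0)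
    (hσvar : ∀ᵐ ω ∂μ, 0 < (μ[(fun ω' => (σ ω')^2)|mV]) ω)
    (hWint : Integrable (Wfun μ mV σ) μ)
    (hTpos : ∀ᵐ ω ∂μ, 0 < Tfun μ mV mH σ ω)
    (hTinvInt : Integrable (fun ω => (Tfun μ mV mH σ ω)⁻¹) μ)
    (hTbpos : ∀ᵐ ω ∂μ, 0 < Tbul μ mV mH mVm σ ω)
    (h : Ω → ℝ) (hh2 : MemLp h 2 μ)
    (hhmeas : StronglyMeasurable[MeasurableSpace.comap σ (inferInstance : MeasurableSpace ℝ) ⊔ mV] h)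
    (hhWσInt : Integrable (fun ω => h ω * Wfun μ mV σ ω * σ ω) μ)
    (hDTinvInt : Integrable (fun ω => Dfun μ mV mH σ h ω * (Tfun μ mV mH σ ω)⁻¹) μ)
    (hAInt : Integrable (Atilde μ mV mH mVm σ h) μ)
    (hAL2 : MemLp (fun ω => Atilde μ mV mH mVm σ h ω * Wfun μ mV σ ω * σ ω) 2 μ) :
    (fun ω => Atilde μ mV mH mVm σ h ω * Wfun μ mV σ ω * σ ω) ∈ LambdaTilde5 μ mV mH mVm σ ∧
      ∀ f ∈ LambdaTilde5 μ mV mH mVm σ,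
        ∫ ω, (h ω - Atilde μ mV mH mVm σ h ω * Wfun μ mV σ ω * σ ω) * f ω ∂μ = 0 := by
  constructor
  · obtain ⟨sAt, h0⟩ := memb_aux μ mVm mH hVmH (Tfun μ mV mH σ) (Tbul μ mV mH mVm σ)
      (Dfun μ mV mH σ h) (μ[(fun ω' => Dfun μ mV mH σ h ω' * (Tfun μ mV mH σ ω')⁻¹)|mVm])
      (Atilde μ mV mH mVm σ h) stronglyMeasurable_condExp stronglyMeasurable_condExp
      rfl rfl rfl hTbpos hTinvInt hDTinvInt hAInt
    exact ⟨Atilde μ mV mH mVm σ h, sAt, h0, rfl, hAL2⟩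
  · rintro f ⟨A, sA, hA0, rfl, hfL2⟩
    simpa using ortho_aux μ mVm mH mV hVmH hHV hV σ h
      (μ[(fun ω => (σ ω)^2)|mV]) (Wfun μ mV σ) (Tfun μ mV mH σ) (Tbul μ mV mH mVm σ)
      (Dfun μ mV mH σ h) (μ[(fun ω' => Dfun μ mV mH σ h ω' * (Tfun μ mV mH σ ω')⁻¹)|mVm])
      (Atilde μ mV mH mVm σ h) A rfl rfl rfl rfl rfl rfl rfl
      hσ2 hσvar hWint hTpos hTinvInt hh2 hhWσInt hDTinvInt hAInt hAL2 sA hA0 hfL2
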